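/- arXiv:2307.11029 — 3 statements merged into one kernel-verified Lean document; each statement's English description precedes it below -/
import Mathlib

section
/- For any non-crossing partition π of a finite cyclically ordered set S, the number of blocks of π plus the number of blocks of its Kreweras complement K(π) equals |S| + 1. -/
open Finset

/-- Two elements lie in the same block of a finpartition. -/
def SameBlock {α : Type*} [DecidableEq α] {s : Finset α} (π : Finpartition s) (a b : α) : Prop :=
  ∃ B ∈ π.parts, a ∈ B ∧ b ∈ B

/-- A finpartition of (a subset of) the linearly ordered set `Fin n` is non-crossing if there
are no blocks `B ≠ B'` with `a, b ∈ B`, `c, d ∈ B'` and `a < c < b < d`. -/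
def IsNoncrossing {n : ℕ} {s : Finset (Fin n)} (π : Finpartition s) : Prop :=
  ∀ a b c d : Fin n, a < c → c < b → b < d →
    SameBlock π a b → SameBlock π c d → SameBlock π a c

/-- The point of the disk corresponding to element `i` (interleaved picture: points at even
positions, arcs at odd positions). -/
def diskPt {n : ℕ} (i : Fin n) : Fin (2 * n) :=
  ⟨2 * i.1, by have := i.isLt; omega⟩

/-- The midpoint of the arc following the point `i`. -/
def diskArc {n : ℕ} (i : Fin n) : Fin (2 * n) :=
  ⟨2 * i.1 + 1, by have := i.isLt; omega⟩

/-- The combined relation on the interleaved circle: `x, y` are related if they are both points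
lying in a common block of `π`, or both arcs lying in a common block of `ρ`. -/
def CombRel {n : ℕ} (π ρ : Finpartition (univ : Finset (Fin n))) (x y : Fin (2 * n)) : Prop :=
  (∃ a b : Fin n, x = diskPt a ∧ y = diskPt b ∧ SameBlock π a b) ∨
  (∃ a b : Fin n, x = diskArc a ∧ y = diskArc b ∧ SameBlock ρ a b)

/-- `ρ` (on the arcs) is compatible with `π` (on the points): the combined configuration on the
interleaved circle is non-crossing, i.e. `ρ` can be drawn in the complement of the convex hulls
of the blocks of `π`. -/
def Compat {n : ℕ} (π ρ : Finpartition (univ : Finset (Fin n))) : Prop :=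
  ∀ x y u v : Fin (2 * n), x < u → u < y → y < v →
    CombRel π ρ x y → CombRel π ρ u v → CombRel π ρ x u

/-- `ρ` is the Kreweras complement of `π`: it is the maximal partition of the arc labels that
does not cross `π`. -/
def IsKreweras {n : ℕ} (π ρ : Finpartition (univ : Finset (Fin n))) : Prop :=
  Compat π ρ ∧ ∀ ρ' : Finpartition (univ : Finset (Fin n)), Compat π ρ' → ρ' ≤ ρ


namespace KrewerasProof

open scoped Classical

variable {β : Type*}

def del (s k : ℕ) : ℕ := if k < s then k else k + 1

lemma del_lt_iff {s a b : ℕ} : del s a < del s b ↔ a < b := by unfold del; split_ifs <;> omega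

lemma del_ne {s a : ℕ} : del s a ≠ s := by unfold del; split_ifs <;> omega

lemma del_lt_n {s k n : ℕ} (h : k < n - 1) : del s k < n := by unfold del; split_ifs <;> omega

lemma del_inv {s b n : ℕ} (hbs : b ≠ s) (hs : s < n) (hb : b < n) :
    ∃ c, c < n - 1 ∧ del s c = b := by
  refine ⟨if b < s then b else b - 1, ?_, ?_⟩
  · split_ifs <;> omega
  · unfold del; split_ifs <;> omega

lemma del_inv_lt {s b k : ℕ} (hbs : b ≠ s) (hbk : b < del s k) : ∃ c, c < k ∧ del s c = b := by
  unfold del at hbk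
  refine ⟨if b < s then b else b - 1, ?_, ?_⟩
  · split_ifs at hbk ⊢ <;> omega
  · unfold del; split_ifs at hbk ⊢ <;> omega

/-- Arcs `i` and `j` are not separated by any chord of blocks of the coloring `f`. -/
def Eqv (n : ℕ) (f : ℕ → β) (i j : ℕ) : Prop :=
  ∀ a b, a < n → b < n → f a = f b → ((a ≤ i ∧ i < b) ↔ (a ≤ j ∧ j < b))

lemma eqv_symm {n : ℕ} {f : ℕ → β} {i j : ℕ} (h : Eqv n f i j) : Eqv n f j i :=
  fun a b ha hb hab => (h a b ha hb hab).symm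

lemma eqv_trans {n : ℕ} {f : ℕ → β} {i j k : ℕ} (h1 : Eqv n f i j) (h2 : Eqv n f j k) :
    Eqv n f i k :=
  fun a b ha hb hab => (h1 a b ha hb hab).trans (h2 a b ha hb hab)

/-- Non-crossing condition for a coloring. -/
def NCf (n : ℕ) (f : ℕ → β) : Prop :=
  ∀ a c b d, d < n → a < c → c < b → b < d → f a = f b → f c = f d → f a = f c

noncomputable def Pcnt (n : ℕ) (f : ℕ → β) : ℕ :=
  ((range n).filter (fun a => ∀ b < a, ¬ f b = f a)).card

noncomputable def Acnt (n : ℕ) (f : ℕ → β) : ℕ :=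
  ((range n).filter (fun j => ∀ i < j, ¬ Eqv n f i j)).card

lemma inside_del {t s : ℕ} (hs : s = t ∨ s = t + 1) (a b i : ℕ) :
    (del s a ≤ del t i ∧ del t i < del s b) ↔ (a ≤ i ∧ i < b) := by
  unfold del; rcases hs with rfl | rfl <;> split_ifs <;> omega

lemma NCf_del {n s : ℕ} {f : ℕ → β} (h : NCf n f) : NCf (n - 1) (fun k => f (del s k)) := by
  intro a c b d hd h1 h2 h3 e1 e2
  exact h (del s a) (del s c) (del s b) (del s d) (del_lt_n hd) (del_lt_iff.mpr h1)
    (del_lt_iff.mpr h2) (del_lt_iff.mpr h3) e1 e2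

lemma card_filter_del {n s : ℕ} {p q : ℕ → Prop} [DecidablePred p] [DecidablePred q] (hs : s < n) (hnp : ¬ p s)
    (hcorr : ∀ k, k < n - 1 → (q k ↔ p (del s k))) :
    ((range n).filter p).card = ((range (n - 1)).filter q).card := by
  symm
  apply Finset.card_bij (fun k _ => del s k)
  · intro k hk
    simp only [mem_filter, mem_range] at hk ⊢
    exact ⟨del_lt_n hk.1, (hcorr k hk.1).mp hk.2⟩
  · intro k1 h1 k2 h2 he
    unfold del at he; split_ifs at he <;> omega
  · intro m hm
    simp only [mem_filter, mem_range] at hm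
    have hms : m ≠ s := fun h => hnp (h ▸ hm.2)
    obtain ⟨c, hc, hce⟩ := del_inv hms hs hm.1
    refine ⟨c, ?_, hce⟩
    simp only [mem_filter, mem_range]
    exact ⟨hc, (hcorr c hc).mpr (by rw [hce]; exact hm.2)⟩

lemma card_filter_del' {n s : ℕ} {p q : ℕ → Prop} [DecidablePred p] [DecidablePred q] (hs : s < n) (hp : p s)
    (hcorr : ∀ k, k < n - 1 → (q k ↔ p (del s k))) :
    ((range n).filter p).card = ((range (n - 1)).filter q).card + 1 := by
  have hmem : s ∈ (range n).filter p := mem_filter.2 ⟨mem_range.2 hs, hp⟩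
  rw [← Finset.card_erase_add_one hmem]
  congr 1
  symm
  apply Finset.card_bij (fun k _ => del s k)
  · intro k hk
    simp only [mem_filter, mem_range] at hk
    simp only [Finset.mem_erase, mem_filter, mem_range]
    exact ⟨del_ne, del_lt_n hk.1, (hcorr k hk.1).mp hk.2⟩
  · intro k1 h1 k2 h2 he
    unfold del at he; split_ifs at he <;> omega
  · intro m hm
    simp only [Finset.mem_erase, mem_filter, mem_range] at hm
    obtain ⟨c, hc, hce⟩ := del_inv hm.1 hs hm.2.1
    refine ⟨c, ?_, hce⟩
    simp only [mem_filter, mem_range]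
    exact ⟨hc, (hcorr c hc).mpr (by rw [hce]; exact hm.2.2)⟩

lemma eqv_del_singleton {n t : ℕ} {f : ℕ → β} (ht1 : 1 ≤ t) (ht : t < n)
    (hs : ∀ b < n, b ≠ t → f b ≠ f t) {i j : ℕ} (hi : i < n - 1) (hj : j < n - 1) :
    Eqv (n - 1) (fun k => f (del t k)) i j ↔ Eqv n f (del t i) (del t j) := by
  constructor
  · intro h a b ha hb hab
    by_cases hat : a = t
    · by_cases hbt : b = t
      · constructor <;> (rintro ⟨x1, x2⟩; omega)
      · exact absurd (show f b = f t by rw [← hat]; exact hab.symm) (hs b hb hbt)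
    · by_cases hbt : b = t
      · exact absurd (show f a = f t by rw [← hbt]; exact hab) (hs a ha hat)
      · obtain ⟨a0, ha0, ha0e⟩ := del_inv hat ht ha
        obtain ⟨b0, hb0, hb0e⟩ := del_inv hbt ht hb
        rw [← ha0e, ← hb0e, inside_del (Or.inl rfl), inside_del (Or.inl rfl)]
        exact h a0 b0 ha0 hb0 (show f (del t a0) = f (del t b0) by rw [ha0e, hb0e]; exact hab)
  · intro h a b ha hb hab
    have := h (del t a) (del t b) (del_lt_n ha) (del_lt_n hb) hab
    rwa [inside_del (Or.inl rfl), inside_del (Or.inl rfl)] at this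

lemma eqv_del_adjacent {n t : ℕ} {f : ℕ → β} (ht : t + 1 < n) (he : f t = f (t + 1))
    {i j : ℕ} (hi : i < n - 1) (hj : j < n - 1) :
    Eqv (n - 1) (fun k => f (del (t + 1) k)) i j ↔ Eqv n f (del t i) (del t j) := by
  constructor
  · intro h a b ha hb hab
    have key : ∀ m : ℕ, m ≠ t →
        ((a ≤ m ∧ m < b) ↔ ((if a = t + 1 then t else a) ≤ m ∧ m < (if b = t + 1 then t else b))) := by
      intro m hm; split_ifs <;> omega
    rw [key _ del_ne, key _ del_ne]
    have hval : ∀ x : ℕ, f (if x = t + 1 then t else x) = f x := by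
      intro x; split_ifs with hx
      · rw [hx]; exact he
      · rfl
    set a' := if a = t + 1 then t else a with ha'
    set b' := if b = t + 1 then t else b with hb'
    have ha'n : a' < n := by rw [ha']; split_ifs <;> omega
    have hb'n : b' < n := by rw [hb']; split_ifs <;> omega
    have ha't : a' ≠ t + 1 := by rw [ha']; split_ifs <;> omega
    have hb't : b' ≠ t + 1 := by rw [hb']; split_ifs <;> omega
    have hab' : f a' = f b' := by rw [ha', hb', hval, hval]; exact hab
    obtain ⟨a0, ha0, ha0e⟩ := del_inv ha't (by omega) ha'n
    obtain ⟨b0, hb0, hb0e⟩ := del_inv hb't (by omega) hb'n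
    rw [← ha0e, ← hb0e, inside_del (Or.inr rfl), inside_del (Or.inr rfl)]
    exact h a0 b0 ha0 hb0
      (show f (del (t + 1) a0) = f (del (t + 1) b0) by rw [ha0e, hb0e]; exact hab')
  · intro h a b ha hb hab
    have := h (del (t + 1) a) (del (t + 1) b) (del_lt_n ha) (del_lt_n hb) hab
    rwa [inside_del (Or.inr rfl), inside_del (Or.inr rfl)] at this

lemma eqv_pred_singleton {n t : ℕ} {f : ℕ → β} (ht1 : 1 ≤ t) (ht : t < n)
    (hs : ∀ b < n, b ≠ t → f b ≠ f t) : Eqv n f (t - 1) t := by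
  intro a b ha hb hab
  by_cases hat : a = t
  · by_cases hbt : b = t
    · constructor <;> (rintro ⟨x1, x2⟩; omega)
    · exact absurd (show f b = f t by rw [← hat]; exact hab.symm) (hs b hb hbt)
  · by_cases hbt : b = t
    · exact absurd (show f a = f t by rw [← hbt]; exact hab) (hs a ha hat)
    · constructor <;> (rintro ⟨x1, x2⟩; constructor <;> omega)

lemma not_eqv_of_adjacent {n t : ℕ} {f : ℕ → β} (ht : t + 1 < n) (he : f t = f (t + 1))
    {m : ℕ} (hm : m ≠ t) : ¬ Eqv n f m t := by
  intro h
  have h2 := (h t (t + 1) (by omega) ht he).mpr ⟨le_rfl, by omega⟩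
  omega

lemma Pcnt_singleton {n t : ℕ} {f : ℕ → β} (ht1 : 1 ≤ t) (ht : t < n)
    (hs : ∀ b < n, b ≠ t → f b ≠ f t) :
    Pcnt n f = Pcnt (n - 1) (fun k => f (del t k)) + 1 := by
  unfold Pcnt
  refine card_filter_del' (s := t) ht ?_ ?_
  · intro b hb
    exact hs b (by omega) (by omega)
  intro k hk
  constructor
  · intro hq b hb
    by_cases hbt : b = t
    · rw [hbt]
      intro hcon
      exact hs (del t k) (del_lt_n hk) del_ne hcon.symm
    · obtain ⟨c, hc, hce⟩ := del_inv_lt hbt hb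
      rw [← hce]; exact hq c hc
  · intro hp c hc
    exact hp (del t c) (del_lt_iff.mpr hc)

lemma Acnt_singleton {n t : ℕ} {f : ℕ → β} (ht1 : 1 ≤ t) (ht : t < n)
    (hs : ∀ b < n, b ≠ t → f b ≠ f t) :
    Acnt n f = Acnt (n - 1) (fun k => f (del t k)) := by
  unfold Acnt
  refine card_filter_del (s := t) ht ?_ ?_
  · intro hcon
    exact hcon (t - 1) (by omega) (eqv_pred_singleton ht1 ht hs)
  · intro k hk
    constructor
    · intro hq i hi hE
      have main : ∀ i', i' ≠ t → i' < del t k → Eqv n f i' (del t k) → False := by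
        intro i' hit hi' hE'
        obtain ⟨c, hc, hce⟩ := del_inv_lt hit hi'
        exact hq c hc ((eqv_del_singleton ht1 ht hs (by omega) hk).mpr (by rw [hce]; exact hE'))
      by_cases hit : i = t
      · rw [hit] at hE hi
        exact main (t - 1) (by omega) (by omega)
          (eqv_trans (eqv_pred_singleton ht1 ht hs) hE)
      · exact main i hit hi hE
    · intro hp c hc hE'
      exact hp (del t c) (del_lt_iff.mpr hc)
        ((eqv_del_singleton ht1 ht hs (by omega) hk).mp hE')

lemma Pcnt_adjacent {n t : ℕ} {f : ℕ → β} (ht : t + 1 < n) (he : f t = f (t + 1)) :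
    Pcnt n f = Pcnt (n - 1) (fun k => f (del (t + 1) k)) := by
  unfold Pcnt
  refine card_filter_del (s := t + 1) (by omega) ?_ ?_
  · intro hcon
    exact hcon t (by omega) he
  · intro k hk
    constructor
    · intro hq b hb
      by_cases hbt : b = t + 1
      · subst hbt
        intro hcon
        have htk : t < k := by unfold del at hb; split_ifs at hb <;> omega
        refine hq t htk ?_
        show f (del (t + 1) t) = f (del (t + 1) k)
        have h1 : del (t + 1) t = t := by unfold del; split_ifs <;> omega
        rw [h1, he]; exact hcon
      · obtain ⟨c, hc, hce⟩ := del_inv_lt hbt hb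
        rw [← hce]; exact hq c hc
    · intro hp c hc
      exact hp (del (t + 1) c) (del_lt_iff.mpr hc)

lemma Acnt_adjacent {n t : ℕ} {f : ℕ → β} (ht : t + 1 < n) (he : f t = f (t + 1)) :
    Acnt n f = Acnt (n - 1) (fun k => f (del (t + 1) k)) + 1 := by
  unfold Acnt
  refine card_filter_del' (s := t) (by omega) ?_ ?_
  · intro i hi hE
    exact not_eqv_of_adjacent ht he (by omega) hE
  · intro k hk
    constructor
    · intro hq i hi hE
      by_cases hit : i = t
      · subst hit
        exact not_eqv_of_adjacent ht he del_ne (eqv_symm hE)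
      · obtain ⟨c, hc, hce⟩ := del_inv_lt hit hi
        exact hq c hc ((eqv_del_adjacent ht he (by omega) hk).mpr (by rw [hce]; exact hE))
    · intro hp c hc hE'
      exact hp (del t c) (del_lt_iff.mpr hc)
        ((eqv_del_adjacent ht he (by omega) hk).mp hE')

lemma exists_step (n : ℕ) (f : ℕ → β) (h2 : 2 ≤ n) (hnc : NCf n f) :
    (∃ t, 1 ≤ t ∧ t < n ∧ ∀ b < n, b ≠ t → f b ≠ f t) ∨ (∃ t, t + 1 < n ∧ f t = f (t + 1)) := by
  by_contra hcon
  push_neg at hcon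
  obtain ⟨hsing, hadj⟩ := hcon
  set S := (range n ×ˢ range n).filter (fun p => p.1 < p.2 ∧ f p.1 = f p.2) with hS
  have hmk : ∀ x y, x < y → y < n → f x = f y → (x, y) ∈ S := by
    intro x y h1 h2' h3
    simp only [hS, mem_filter, mem_product, mem_range]
    exact ⟨⟨by omega, h2'⟩, h1, h3⟩
  have hSne : S.Nonempty := by
    obtain ⟨b, hb, hbne, hbeq⟩ := hsing 1 le_rfl (by omega)
    rcases Nat.lt_or_ge b 1 with h | h
    · have hb0 : b = 0 := by omega
      exact ⟨(0, 1), hmk 0 1 (by omega) (by omega) (by rw [← hb0]; exact hbeq)⟩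
    · exact ⟨(1, b), hmk 1 b (by omega) hb hbeq.symm⟩
  obtain ⟨⟨a, b⟩, hmemS, hmin⟩ := Finset.exists_min_image S (fun p => p.2 - p.1) hSne
  simp only [hS, mem_filter, mem_product, mem_range] at hmemS
  obtain ⟨⟨han, hbn⟩, hab, heq⟩ := hmemS
  have hmin' : ∀ x y, x < y → y < n → f x = f y → b - a ≤ y - x := by
    intro x y h1 h2' h3
    exact hmin (x, y) (hmk x y h1 h2' h3)
  by_cases hadj1 : b = a + 1
  · exact hadj a (by omega) (by rw [← hadj1]; exact heq)
  · obtain ⟨d, hdn, hdne, hdeq⟩ := hsing (a + 1) (by omega) (by omega)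
    rcases Nat.lt_trichotomy d a with hd | hd | hd
    · have h1 : f d = f a := hnc d a (a + 1) b hbn (by omega) (by omega) (by omega) hdeq heq
      have h3 := hmin' a (a + 1) (by omega) (by omega) (h1.symm.trans hdeq)
      omega
    · have h3 := hmin' a (a + 1) (by omega) (by omega) (by rw [hd] at hdeq; exact hdeq)
      omega
    · rcases Nat.lt_trichotomy d b with hdb | hdb | hdb
      · have h3 := hmin' (a + 1) d (by omega) (by omega) hdeq.symm
        omega
      · have h3 := hmin' a (a + 1) (by omega) (by omega) (heq.trans (show f b = f (a + 1) by rw [← hdb]; exact hdeq))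
        omega
      · have h1 : f a = f (a + 1) :=
          hnc a (a + 1) b d hdn (by omega) (by omega) (by omega) heq hdeq.symm
        have h3 := hmin' a (a + 1) (by omega) (by omega) h1
        omega

theorem pure_main : ∀ n : ℕ, ∀ f : ℕ → β, 1 ≤ n → NCf n f → Pcnt n f + Acnt n f = n + 1 := by
  intro n
  induction n using Nat.strong_induction_on with
  | _ n ih =>
    intro f hn hnc
    rcases eq_or_lt_of_le hn with h1 | h2
    · have hn1 : n = 1 := h1.symm
      subst hn1
      have hP : Pcnt 1 f = 1 := by
        unfold Pcnt
        rw [Finset.filter_true_of_mem]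
        · simp
        · intro x hx b hb
          rw [mem_range] at hx
          exact absurd hb (by omega)
      have hA : Acnt 1 f = 1 := by
        unfold Acnt
        rw [Finset.filter_true_of_mem]
        · simp
        · intro x hx b hb
          rw [mem_range] at hx
          exact absurd hb (by omega)
      rw [hP, hA]
    · rcases exists_step n f h2 hnc with ⟨t, ht1, ht2, hs⟩ | ⟨t, ht, he⟩
      · rw [Pcnt_singleton ht1 ht2 hs, Acnt_singleton ht1 ht2 hs]
        have := ih (n - 1) (by omega) (fun k => f (del t k)) (by omega) (NCf_del hnc)
        omega
      · rw [Pcnt_adjacent ht he, Acnt_adjacent ht he]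
        have := ih (n - 1) (by omega) (fun k => f (del (t + 1) k)) (by omega) (NCf_del hnc)
        omega

section Interface

variable {n : ℕ}

lemma sameBlock_iff_part_eq {μ : Finpartition (univ : Finset (Fin n))} {a b : Fin n} :
    SameBlock μ a b ↔ μ.part a = μ.part b := by
  constructor
  · rintro ⟨B, hB, haB, hbB⟩
    rw [μ.part_eq_of_mem hB haB, μ.part_eq_of_mem hB hbB]
  · intro h
    refine ⟨μ.part a, μ.part_mem.mpr (mem_univ a), μ.mem_part (mem_univ a), ?_⟩
    rw [h]; exact μ.mem_part (mem_univ b)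

lemma sameBlock_symm {μ : Finpartition (univ : Finset (Fin n))} {a b : Fin n}
    (h : SameBlock μ a b) : SameBlock μ b a := by
  obtain ⟨B, h1, h2, h3⟩ := h; exact ⟨B, h1, h3, h2⟩

lemma parts_card_eq (μ : Finpartition (univ : Finset (Fin n))) (E : ℕ → ℕ → Prop)
    [DecidablePred (fun j => ∀ i < j, ¬ E i j)]
    (hE : ∀ i j : Fin n, SameBlock μ i j ↔ E i.1 j.1) :
    μ.parts.card = ((range n).filter (fun j => ∀ i < j, ¬ E i j)).card := by
  symm
  apply Finset.card_bij (fun j hj => μ.part (⟨j, mem_range.mp (mem_filter.mp hj).1⟩ : Fin n))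
  · intro j hj
    exact μ.part_mem.mpr (mem_univ _)
  · intro j1 hj1 j2 hj2 hpart
    have hj1' := mem_filter.mp hj1
    have hj2' := mem_filter.mp hj2
    by_contra hne
    have hsb : SameBlock μ ⟨j1, mem_range.mp hj1'.1⟩ ⟨j2, mem_range.mp hj2'.1⟩ := by
      rw [sameBlock_iff_part_eq]; exact hpart
    rcases Nat.lt_or_ge j1 j2 with h | h
    · exact hj2'.2 j1 h ((hE _ _).mp hsb)
    · have h' : j2 < j1 := by omega
      exact hj1'.2 j2 h' ((hE _ _).mp (sameBlock_symm hsb))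
  · intro B hB
    have hne : B.Nonempty := μ.nonempty_of_mem_parts hB
    obtain ⟨m, hmB, hmle⟩ : ∃ m : Fin n, m ∈ B ∧ ∀ x ∈ B, m ≤ x :=
      ⟨B.min' hne, B.min'_mem hne, fun x hx => B.min'_le x hx⟩
    have hmem : m.1 ∈ (range n).filter (fun j => ∀ i < j, ¬ E i j) := by
      simp only [mem_filter, mem_range]
      refine ⟨m.isLt, ?_⟩
      intro i hi hEi
      have hsb : SameBlock μ ⟨i, by omega⟩ ⟨m.1, m.isLt⟩ := (hE _ _).mpr hEi
      obtain ⟨B', hB', hiB', hmB'⟩ := hsb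
      have hBB : B' = B := μ.eq_of_mem_parts hB' hB hmB' hmB
      have hiB : (⟨i, by omega⟩ : Fin n) ∈ B := hBB ▸ hiB'
      have hle : m.1 ≤ i := hmle _ hiB
      omega
    exact ⟨m.1, hmem, μ.part_eq_of_mem hB hmB⟩

lemma compat_sep {π ρ : Finpartition (univ : Finset (Fin n))} (hc : Compat π ρ)
    {a b i j : Fin n} (hab : SameBlock π a b) (hij : SameBlock ρ i j)
    (h1 : a.1 ≤ i.1) (h2 : i.1 < b.1) (h3 : b.1 ≤ j.1) : False := by
  have hres := hc (diskPt a) (diskPt b) (diskArc i) (diskArc j)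
    (by rw [Fin.lt_def]; show 2 * a.1 < 2 * i.1 + 1; omega)
    (by rw [Fin.lt_def]; show 2 * i.1 + 1 < 2 * b.1; omega)
    (by rw [Fin.lt_def]; show 2 * b.1 < 2 * j.1 + 1; omega)
    (Or.inl ⟨a, b, rfl, rfl, hab⟩) (Or.inr ⟨i, j, rfl, rfl, hij⟩)
  rcases hres with ⟨a', b', hx, hy, _⟩ | ⟨a', b', hx, hy, _⟩
  · have h5 : 2 * i.1 + 1 = 2 * b'.1 := congrArg Fin.val hy
    omega
  · have h5 : 2 * a.1 = 2 * a'.1 + 1 := congrArg Fin.val hx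
    omega

lemma compat_sep' {π ρ : Finpartition (univ : Finset (Fin n))} (hc : Compat π ρ)
    {a b i j : Fin n} (hab : SameBlock π a b) (hij : SameBlock ρ i j)
    (h1 : i.1 < a.1) (h2 : a.1 ≤ j.1) (h3 : j.1 < b.1) : False := by
  have hres := hc (diskArc i) (diskArc j) (diskPt a) (diskPt b)
    (by rw [Fin.lt_def]; show 2 * i.1 + 1 < 2 * a.1; omega)
    (by rw [Fin.lt_def]; show 2 * a.1 < 2 * j.1 + 1; omega)
    (by rw [Fin.lt_def]; show 2 * j.1 + 1 < 2 * b.1; omega)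
    (Or.inr ⟨i, j, rfl, rfl, hij⟩) (Or.inl ⟨a, b, rfl, rfl, hab⟩)
  rcases hres with ⟨a', b', hx, hy, _⟩ | ⟨a', b', hx, hy, _⟩
  · have h5 : 2 * i.1 + 1 = 2 * a'.1 := congrArg Fin.val hx
    omega
  · have h5 : 2 * a.1 = 2 * b'.1 + 1 := congrArg Fin.val hy
    omega

lemma eqv_of_sameBlock {π ρ : Finpartition (univ : Finset (Fin n))}
    {f : ℕ → Finset (Fin n)}
    (hc : Compat π ρ) (hfπ : ∀ a b : Fin n, SameBlock π a b ↔ f a.1 = f b.1)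
    {i j : Fin n} (hij : SameBlock ρ i j) : Eqv n f i.1 j.1 := by
  intro a b ha hb hab
  have hab' : SameBlock π ⟨a, ha⟩ ⟨b, hb⟩ := (hfπ _ _).mpr hab
  by_contra hneg
  have hcase : ((a ≤ i.1 ∧ i.1 < b) ∧ ¬(a ≤ j.1 ∧ j.1 < b)) ∨
      ((a ≤ j.1 ∧ j.1 < b) ∧ ¬(a ≤ i.1 ∧ i.1 < b)) := by tauto
  rcases hcase with ⟨⟨h1, h2⟩, h3⟩ | ⟨⟨h1, h2⟩, h3⟩
  · rcases Nat.lt_or_ge j.1 a with hj | hj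
    · exact compat_sep' hc hab' (sameBlock_symm hij) hj h1 h2
    · have hbj : b ≤ j.1 := by omega
      exact compat_sep hc hab' hij h1 h2 hbj
  · rcases Nat.lt_or_ge i.1 a with hi | hi
    · exact compat_sep' hc hab' hij hi h1 h2
    · have hbi : b ≤ i.1 := by omega
      exact compat_sep hc hab' (sameBlock_symm hij) h1 h2 hbi

lemma compat_of_eqv {π ρ' : Finpartition (univ : Finset (Fin n))}
    {f : ℕ → Finset (Fin n)} (hπ : IsNoncrossing π)
    (hfπ : ∀ a b : Fin n, SameBlock π a b ↔ f a.1 = f b.1)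
    (hfρ : ∀ i j : Fin n, SameBlock ρ' i j ↔ Eqv n f i.1 j.1) : Compat π ρ' := by
  rintro x y u v hxu huy hyv (⟨a, b, rfl, rfl, hab⟩ | ⟨i, j, rfl, rfl, hij⟩)
    (⟨c, d, rfl, rfl, hcd⟩ | ⟨k, l, rfl, rfl, hkl⟩)
  · have h1 : 2 * a.1 < 2 * c.1 := hxu
    have h2 : 2 * c.1 < 2 * b.1 := huy
    have h3 : 2 * b.1 < 2 * d.1 := hyv
    refine Or.inl ⟨a, c, rfl, rfl, hπ a b c d ?_ ?_ ?_ hab hcd⟩ <;>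
      (rw [Fin.lt_def]; omega)
  · exfalso
    have h1 : 2 * a.1 < 2 * k.1 + 1 := hxu
    have h2 : 2 * k.1 + 1 < 2 * b.1 := huy
    have h3 : 2 * b.1 < 2 * l.1 + 1 := hyv
    have hE := (hfρ k l).mp hkl a.1 b.1 a.isLt b.isLt ((hfπ a b).mp hab)
    omega
  · exfalso
    have h1 : 2 * i.1 + 1 < 2 * c.1 := hxu
    have h2 : 2 * c.1 < 2 * j.1 + 1 := huy
    have h3 : 2 * j.1 + 1 < 2 * d.1 := hyv
    have hE := (hfρ i j).mp hij c.1 d.1 c.isLt d.isLt ((hfπ c d).mp hcd)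
    omega
  · have h1 : 2 * i.1 + 1 < 2 * k.1 + 1 := hxu
    have h2 : 2 * k.1 + 1 < 2 * j.1 + 1 := huy
    have h3 : 2 * j.1 + 1 < 2 * l.1 + 1 := hyv
    refine Or.inr ⟨i, k, rfl, rfl, (hfρ i k).mpr ?_⟩
    intro p q hp hq hpq
    have e1 := (hfρ i j).mp hij p q hp hq hpq
    have e2 := (hfρ k l).mp hkl p q hp hq hpq
    omega

end Interface

end KrewerasProof

/-- For any non-crossing partition `π` of a finite cyclically ordered set with `n` elements,
the number of blocks of `π` plus the number of blocks of its Kreweras complement equals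
`n + 1`. -/
theorem blocks_add_blocks_kreweras (n : ℕ) (hn : 0 < n)
    (π ρ : Finpartition (univ : Finset (Fin n)))
    (hπ : IsNoncrossing π) (hρ : IsKreweras π ρ) :
    π.parts.card + ρ.parts.card = n + 1 := by
  classical
  set f : ℕ → Finset (Fin n) := fun m => if h : m < n then π.part ⟨m, h⟩ else ∅ with hf
  have hfval : ∀ a : Fin n, f a.1 = π.part a := by
    intro a
    simp only [hf]
    rw [dif_pos a.isLt]
  have hfπ : ∀ a b : Fin n, SameBlock π a b ↔ f a.1 = f b.1 := by
    intro a b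
    rw [KrewerasProof.sameBlock_iff_part_eq, hfval, hfval]
  let st : Setoid (Fin n) := ⟨fun i j => KrewerasProof.Eqv n f i.1 j.1,
    ⟨fun i a b _ _ _ => Iff.rfl,
     fun h a b ha hb hab => (h a b ha hb hab).symm,
     fun h1 h2 a b ha hb hab => (h1 a b ha hb hab).trans (h2 a b ha hb hab)⟩⟩
  letI : DecidableRel st.r := fun a b => Classical.propDecidable _
  let ρs := Finpartition.ofSetoid st
  have hρs : ∀ i j : Fin n, SameBlock ρs i j ↔ KrewerasProof.Eqv n f i.1 j.1 := by
    intro i j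
    rw [KrewerasProof.sameBlock_iff_part_eq]
    constructor
    · intro h
      have hj : j ∈ ρs.part i :=
        (Finpartition.mem_part_iff_part_eq_part ρs (mem_univ j) (mem_univ i)).mpr h.symm
      exact (Finpartition.mem_part_ofSetoid_iff_rel).mp hj
    · intro h
      have hj : j ∈ ρs.part i := (Finpartition.mem_part_ofSetoid_iff_rel).mpr h
      exact ((Finpartition.mem_part_iff_part_eq_part ρs (mem_univ j) (mem_univ i)).mp hj).symm
  have hcs : Compat π ρs := KrewerasProof.compat_of_eqv hπ hfπ hρs
  have hle : ρs ≤ ρ := hρ.2 ρs hcs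
  have hfρ : ∀ i j : Fin n, SameBlock ρ i j ↔ KrewerasProof.Eqv n f i.1 j.1 := by
    intro i j
    constructor
    · exact fun h => KrewerasProof.eqv_of_sameBlock hρ.1 hfπ h
    · intro hE
      obtain ⟨B, hB, hiB, hjB⟩ := (hρs i j).mpr hE
      obtain ⟨C, hC, hBC⟩ := hle hB
      exact ⟨C, hC, hBC hiB, hBC hjB⟩
  have hNC : KrewerasProof.NCf n f := by
    intro a c b d hd h1 h2 h3 e1 e2
    exact (hfπ ⟨a, by omega⟩ ⟨c, by omega⟩).mp
      (hπ ⟨a, by omega⟩ ⟨b, by omega⟩ ⟨c, by omega⟩ ⟨d, by omega⟩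
        (Fin.mk_lt_mk.mpr h1) (Fin.mk_lt_mk.mpr h2) (Fin.mk_lt_mk.mpr h3)
        ((hfπ _ _).mpr e1) ((hfπ _ _).mpr e2))
  have hP : π.parts.card = KrewerasProof.Pcnt n f := by
    rw [KrewerasProof.parts_card_eq π (fun x y => f x = f y) hfπ]
    unfold KrewerasProof.Pcnt
    congr 1
    all_goals
      ext x
      simp only [mem_filter]
  have hA : ρ.parts.card = KrewerasProof.Acnt n f := by
    rw [KrewerasProof.parts_card_eq ρ (KrewerasProof.Eqv n f) hfρ]
    unfold KrewerasProof.Acnt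
    congr 1
    all_goals
      ext x
      simp only [mem_filter]
  rw [hP, hA]
  exact KrewerasProof.pure_main n f hn hNC
end

section
/- The Stieltjes transform m(z) of the semicircle distribution satisfies the Dyson equation -1/m(z) = m(z) + z for all z ∈ ℂ \ ℝ, together with the sign condition Im(z)·Im(m(z)) > 0. -/
open MeasureTheory Complex Set intervalIntegral Metric

/-- The semicircle density `ρ_sc(x) = √(4 - x²) / (2π)` on `[-2, 2]`. -/
noncomputable def rhoSc (x : ℝ) : ℝ := Real.sqrt (4 - x ^ 2) / (2 * Real.pi)

/-- The Stieltjes transform of the semicircle distribution, with the sign convention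
`m(z) = (√(z² - 4) - z)/2` (so that `Im z · Im m(z) > 0`). -/
noncomputable def msc (z : ℂ) : ℂ := ∫ x in (-2 : ℝ)..2, (rhoSc x : ℂ) / ((x : ℂ) - z)

noncomputable def msc' (z : ℂ) : ℂ := ∫ x in (-2 : ℝ)..2, (rhoSc x : ℂ) / ((x : ℂ) - z) ^ 2

lemma sub_z_ne {z : ℂ} (hz : z.im ≠ 0) (x : ℝ) : (x : ℂ) - z ≠ 0 := by
  intro h
  have : ((x : ℂ) - z).im = 0 := by rw [h]; simp
  simp [Complex.sub_im] at this
  exact hz this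

lemma cont_rho : Continuous rhoSc :=
  (Real.continuous_sqrt.comp (by continuity)).div_const _

lemma rho_nonneg (x : ℝ) : 0 ≤ rhoSc x :=
  div_nonneg (Real.sqrt_nonneg _) (by positivity)

lemma rho_le (x : ℝ) : rhoSc x ≤ 1 := by
  unfold rhoSc
  rw [div_le_one (by positivity)]
  calc Real.sqrt (4 - x ^ 2) ≤ Real.sqrt 4 := by
        apply Real.sqrt_le_sqrt; nlinarith [sq_nonneg x]
    _ ≤ 2 * Real.pi := by
        rw [show (4:ℝ) = 2^2 by norm_num, Real.sqrt_sq (by norm_num)]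
        nlinarith [Real.pi_gt_three]

lemma intble_pow (z : ℂ) (hz : z.im ≠ 0) (n : ℕ) :
    IntervalIntegrable (fun x : ℝ => (rhoSc x : ℂ) / ((x : ℂ) - z) ^ n) volume (-2) 2 := by
  apply Continuous.intervalIntegrable
  exact (continuous_ofReal.comp cont_rho).div
    ((continuous_ofReal.sub continuous_const).pow n)
    (fun x => pow_ne_zero _ (sub_z_ne hz x))

lemma abs_sub_ge {z : ℂ} (x : ℝ) : |z.im| ≤ ‖(x : ℂ) - z‖ := by
  have h := Complex.abs_im_le_norm ((x : ℂ) - z)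
  simpa [Complex.sub_im] using h

lemma hasDerivAt_msc {z : ℂ} (hz : z.im ≠ 0) : HasDerivAt msc (msc' z) z := by
  set ε := |z.im| / 2 with hε
  have hε0 : 0 < ε := by positivity
  have him : ∀ w ∈ ball z ε, ∀ x : ℝ, ε ≤ ‖(x:ℂ) - w‖ := by
    intro w hw x
    have h1 : |z.im - w.im| ≤ dist w z := by
      rw [dist_comm, Complex.dist_eq]
      simpa using Complex.abs_im_le_norm (z - w)
    have h2 : dist w z < ε := mem_ball.mp hw
    have h3 : ε ≤ |w.im| := by
      have h4 : |z.im| - |w.im| ≤ |z.im - w.im| := abs_sub_abs_le_abs_sub _ _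
      rw [hε]; linarith
    exact h3.trans (abs_sub_ge x)
  have hne : ∀ w ∈ ball z ε, ∀ x : ℝ, (x : ℂ) - w ≠ 0 := by
    intro w hw x h
    have := him w hw x
    rw [h] at this; simp at this; linarith
  have key := intervalIntegral.hasDerivAt_integral_of_dominated_loc_of_deriv_le
    (F := fun w x => (rhoSc x : ℂ) / ((x : ℂ) - w))
    (F' := fun w x => (rhoSc x : ℂ) / ((x : ℂ) - w) ^ 2)
    (x₀ := z) (bound := fun _ => (ε ^ 2)⁻¹) (a := -2) (b := 2) (μ := volume) (s := ball z ε) (ball_mem_nhds z hε0)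
    ?_ ?_ ?_ ?_ ?_ ?_
  · exact key.2
  · filter_upwards with w
    exact ((Complex.measurable_ofReal.comp cont_rho.measurable).div
      ((Complex.measurable_ofReal.comp measurable_id).sub measurable_const)).aestronglyMeasurable
  · simpa using intble_pow z hz 1
  · exact (((Complex.measurable_ofReal.comp cont_rho.measurable).div
      (((Complex.measurable_ofReal.comp measurable_id).sub measurable_const).pow
        measurable_const)).aestronglyMeasurable)
  · filter_upwards with t _ w hw
    rw [norm_div, norm_pow]
    have h1 := him w hw t
    have h2 : ‖(rhoSc t : ℂ)‖ ≤ 1 := by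
      rw [Complex.norm_real, Real.norm_eq_abs, _root_.abs_of_nonneg (rho_nonneg t)]
      exact rho_le t
    have h3 : (0:ℝ) < ε := hε0
    have h4 : ε ^ 2 ≤ ‖(t:ℂ) - w‖ ^ 2 := by
      apply pow_le_pow_left₀ h3.le _ 2
      simpa using h1
    rw [← one_div]
    exact div_le_div₀ zero_le_one h2 (pow_pos h3 2) h4
  · exact intervalIntegrable_const
  · filter_upwards with t _ w hw
    have hne' : (t:ℂ) - w ≠ 0 := hne w hw t
    have h1 : HasDerivAt (fun w : ℂ => (t:ℂ) - w) (-1) w := (hasDerivAt_id w).const_sub _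
    have h2 := (h1.inv hne').const_mul (rhoSc t : ℂ)
    have heq : (fun w : ℂ => (rhoSc t : ℂ) / ((t:ℂ) - w)) =
        fun w : ℂ => (rhoSc t : ℂ) * ((t:ℂ) - w)⁻¹ := by
      funext v; rw [div_eq_mul_inv]
    rw [heq]
    refine h2.congr_deriv ?_
    ring

lemma ftc_key {z : ℂ} (hz : z.im ≠ 0) :
    ∫ x in (-2:ℝ)..2, (Real.sqrt (4 - x^2) : ℂ) * (2*(x:ℂ)^2 - 3*(x:ℂ)*z + 4) / ((x:ℂ) - z)^2
      = 0 := by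
  set f : ℝ → ℂ := fun x => ((Real.sqrt (4 - x^2))^3 : ℝ) / ((x:ℂ) - z) with hf
  set f' : ℝ → ℂ := fun x =>
    -((Real.sqrt (4 - x^2) : ℂ) * (2*(x:ℂ)^2 - 3*(x:ℂ)*z + 4) / ((x:ℂ) - z)^2) with hf'
  have contnum : Continuous fun x : ℝ => ((Real.sqrt (4 - x^2))^3 : ℝ) :=
    (Real.continuous_sqrt.comp (by continuity)).pow 3
  have hcont : ContinuousOn f (Icc (-2) 2) :=
    ((continuous_ofReal.comp contnum).div (continuous_ofReal.sub continuous_const)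
      (fun x => sub_z_ne hz x)).continuousOn
  have f'cont : Continuous f' := by
    apply Continuous.neg
    exact ((continuous_ofReal.comp (Real.continuous_sqrt.comp (by continuity))).mul
      (by continuity)).div ((continuous_ofReal.sub continuous_const).pow 2)
      (fun x => pow_ne_zero _ (sub_z_ne hz x))
  have hderiv : ∀ x ∈ Ioo (-2:ℝ) 2, HasDerivWithinAt f (f' x) (Ioi x) x := by
    intro x hx
    have hx4 : 0 < 4 - x^2 := by nlinarith [hx.1, hx.2]
    have hsne : Real.sqrt (4 - x^2) ≠ 0 := by positivity
    have h0 : HasDerivAt (fun x : ℝ => 4 - x^2) (-(2*x)) x := by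
      simpa using (hasDerivAt_pow 2 x).const_sub 4
    have hs := h0.sqrt hx4.ne'
    have hc := hs.pow 3
    have hnum : HasDerivAt (fun x : ℝ => (Real.sqrt (4 - x^2))^3)
        (-3 * x * Real.sqrt (4 - x^2)) x := by
      refine hc.congr_deriv ?_
      symm
      field_simp
      ring
    have hden : HasDerivAt (fun x : ℝ => (x:ℂ) - z) 1 x := by
      simpa using ((hasDerivAt_id x).ofReal_comp (z := x)).sub_const z
    have hdiv := (hnum.ofReal_comp).div hden (sub_z_ne hz x)
    apply HasDerivAt.hasDerivWithinAt
    refine hdiv.congr_deriv ?_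
    have hsq : ((Real.sqrt (4 - x^2))^3 : ℝ) = Real.sqrt (4 - x^2) * (4 - x^2) := by
      rw [pow_succ, Real.sq_sqrt hx4.le]; ring
    rw [hf']
    push_cast [hsq]
    field_simp [sub_z_ne hz x]
    ring
  have hint := intervalIntegral.integral_eq_sub_of_hasDeriv_right_of_le (by norm_num)
    hcont hderiv (f'cont.intervalIntegrable _ _)
  have hzero : f 2 - f (-2) = 0 := by
    have : Real.sqrt (4 - (2:ℝ)^2) = 0 := by norm_num
    have h2 : Real.sqrt (4 - (-2:ℝ)^2) = 0 := by norm_num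
    simp [hf, this, h2]
  rw [hzero] at hint
  rw [hf', intervalIntegral.integral_neg, neg_eq_zero] at hint
  exact hint

lemma integral_sqrt4 : ∫ x in (-2 : ℝ)..2, Real.sqrt (4 - x ^ 2) = 2 * Real.pi := by
  have h := intervalIntegral.integral_comp_mul_left
    (fun x : ℝ => Real.sqrt (4 - x ^ 2)) (c := 2) (a := -1) (b := 1) (by norm_num)
  have h2 : ∀ u : ℝ, Real.sqrt (4 - (2*u) ^ 2) = 2 * Real.sqrt (1 - u ^ 2) := by
    intro u
    rw [show (4 : ℝ) - (2*u)^2 = 4 * (1 - u^2) by ring, Real.sqrt_mul (by norm_num),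
      show (4:ℝ) = 2^2 by norm_num, Real.sqrt_sq (by norm_num)]
  simp only [h2] at h
  rw [intervalIntegral.integral_const_mul, integral_sqrt_one_sub_sq] at h
  norm_num at h
  linarith [h]

lemma integral_rho : ∫ x in (-2 : ℝ)..2, rhoSc x = 1 := by
  unfold rhoSc
  rw [intervalIntegral.integral_div, integral_sqrt4]
  field_simp

lemma sqrt_intble (z : ℂ) (hz : z.im ≠ 0) (n : ℕ) :
    IntervalIntegrable (fun x : ℝ => (Real.sqrt (4 - x^2) : ℂ) / ((x : ℂ) - z) ^ n)
      volume (-2) 2 := by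
  apply Continuous.intervalIntegrable
  exact (continuous_ofReal.comp (Real.continuous_sqrt.comp (by continuity))).div
    ((continuous_ofReal.sub continuous_const).pow n)
    (fun x => pow_ne_zero _ (sub_z_ne hz x))

lemma sqrt_msc {z : ℂ} (hz : z.im ≠ 0) :
    ∫ x in (-2:ℝ)..2, (Real.sqrt (4 - x^2) : ℂ) / ((x:ℂ) - z)
      = (2 * Real.pi : ℝ) * msc z := by
  unfold msc
  rw [← intervalIntegral.integral_const_mul]
  apply intervalIntegral.integral_congr
  intro x _
  unfold rhoSc
  have hpi : (Real.pi : ℂ) ≠ 0 := Complex.ofReal_ne_zero.mpr Real.pi_ne_zero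
  push_cast
  field_simp

lemma sqrt_msc' {z : ℂ} (hz : z.im ≠ 0) :
    ∫ x in (-2:ℝ)..2, (Real.sqrt (4 - x^2) : ℂ) / ((x:ℂ) - z) ^ 2
      = (2 * Real.pi : ℝ) * msc' z := by
  unfold msc'
  rw [← intervalIntegral.integral_const_mul]
  apply intervalIntegral.integral_congr
  intro x _
  unfold rhoSc
  have hpi : (Real.pi : ℂ) ≠ 0 := Complex.ofReal_ne_zero.mpr Real.pi_ne_zero
  push_cast
  field_simp

lemma ode {z : ℂ} (hz : z.im ≠ 0) : (4 - z^2) * msc' z = -2 - z * msc z := by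
  have key := ftc_key hz
  have split : ∀ x : ℝ, (Real.sqrt (4 - x^2) : ℂ) * (2*(x:ℂ)^2 - 3*(x:ℂ)*z + 4) / ((x:ℂ) - z)^2
      = 2 * (Real.sqrt (4 - x^2) : ℂ)
        + z * ((Real.sqrt (4 - x^2) : ℂ) / ((x:ℂ) - z))
        + (4 - z^2) * ((Real.sqrt (4 - x^2) : ℂ) / ((x:ℂ) - z)^2) := by
    intro x
    field_simp [sub_z_ne hz x]
    ring
  rw [intervalIntegral.integral_congr (g := fun x : ℝ =>
      2 * (Real.sqrt (4 - x^2) : ℂ)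
        + z * ((Real.sqrt (4 - x^2) : ℂ) / ((x:ℂ) - z))
        + (4 - z^2) * ((Real.sqrt (4 - x^2) : ℂ) / ((x:ℂ) - z)^2))
    (fun x _ => split x)] at key
  have i0 : IntervalIntegrable (fun x : ℝ => 2 * (Real.sqrt (4 - x^2) : ℂ)) volume (-2) 2 :=
    (Continuous.intervalIntegrable (by continuity) _ _)
  have i1 := (sqrt_intble z hz 1).const_mul z
  have i2 := (sqrt_intble z hz 2).const_mul (4 - z^2)
  rw [intervalIntegral.integral_add (i0.add (by simpa using i1)) i2,
    intervalIntegral.integral_add i0 (by simpa using i1),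
    intervalIntegral.integral_const_mul, intervalIntegral.integral_const_mul,
    intervalIntegral.integral_const_mul] at key
  rw [sqrt_msc hz, sqrt_msc' hz] at key
  have hsq : ∫ x in (-2:ℝ)..2, (Real.sqrt (4 - x^2) : ℂ) = (2 * Real.pi : ℝ) := by
    rw [intervalIntegral.integral_ofReal, integral_sqrt4]
  rw [hsq] at key
  have hpi : ((2 * Real.pi : ℝ) : ℂ) ≠ 0 := by
    rw [Complex.ofReal_ne_zero]
    positivity
  have key2 : ((2 * Real.pi : ℝ) : ℂ) * (2 + z * msc z + (4 - z^2) * msc' z) = 0 := by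
    linear_combination key
  have key3 := (mul_eq_zero.mp key2).resolve_left hpi
  linear_combination key3

lemma msc_bound {z : ℂ} (hz : z.im ≠ 0) : ‖msc z‖ ≤ 1 / |z.im| := by
  have him : 0 < |z.im| := abs_pos.mpr hz
  have hb : ‖∫ x in (-2:ℝ)..2, (rhoSc x : ℂ) / ((x : ℂ) - z)‖
      ≤ |(∫ x in (-2:ℝ)..2, rhoSc x / |z.im|)| := by
    apply intervalIntegral.norm_integral_le_abs_of_norm_le
    · filter_upwards with t
      rw [norm_div, Complex.norm_real, Real.norm_eq_abs, _root_.abs_of_nonneg (rho_nonneg t)]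
      gcongr
      · exact rho_nonneg t
      · simpa using abs_sub_ge (z := z) t
    · exact (cont_rho.div_const _).intervalIntegrable _ _
  have heval : ∫ x in (-2:ℝ)..2, rhoSc x / |z.im| = 1 / |z.im| := by
    rw [intervalIntegral.integral_div, integral_rho]
  rw [heval, _root_.abs_of_nonneg (by positivity)] at hb
  exact hb

noncomputable def Qsc (w : ℂ) : ℂ := (msc w ^ 2 + w * msc w + 1) / (w ^ 2 - 4)

lemma sq_ne_four {w : ℂ} (hw : w.im ≠ 0) : w ^ 2 - 4 ≠ 0 := by
  intro h
  have h2 : w ^ 2 = 4 := sub_eq_zero.mp h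
  have him : (w ^ 2).im = 0 := by rw [h2]; simp
  have hre : (w ^ 2).re = 4 := by rw [h2]; simp
  rw [sq, Complex.mul_im] at him
  rw [sq, Complex.mul_re] at hre
  have hre0 : w.re = 0 := by
    rcases mul_eq_zero.mp (by linarith : w.re * w.im = 0) with h' | h'
    · exact h'
    · exact absurd h' hw
  nlinarith [sq_nonneg w.im]

lemma hasDerivAt_Qsc {w : ℂ} (hw : w.im ≠ 0) : HasDerivAt Qsc 0 w := by
  have hm := hasDerivAt_msc hw
  have hnum := ((hm.pow 2).add ((hasDerivAt_id w).mul hm)).add_const (1 : ℂ)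
  have hden := (hasDerivAt_pow 2 w).sub_const (4 : ℂ)
  have h := hnum.div hden (sq_ne_four hw)
  refine h.congr_deriv ?_
  rw [div_eq_zero_iff]
  left
  simp only [Pi.add_apply, Pi.mul_apply, Pi.pow_apply, id_eq]
  push_cast
  linear_combination (-(2 * msc w + w)) * ode hw

lemma Qsc_eq_zero_upper {w : ℂ} (hw : 0 < w.im) : Qsc w = 0 := by
  set S : Set ℂ := {c : ℂ | 0 < c.im} with hSdef
  have hS : IsOpen S := isOpen_lt continuous_const Complex.continuous_im
  have hconv : Convex ℝ S := hSdef ▸ convex_halfSpace_im_gt 0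
  have hconst : ∀ w₂ ∈ S, Qsc w = Qsc w₂ := by
    intro w₂ hw₂
    apply hconv.is_const_of_fderivWithin_eq_zero (𝕜 := ℂ)
    · intro u hu
      exact ((hasDerivAt_Qsc (ne_of_gt hu)).differentiableAt).differentiableWithinAt
    · intro u hu
      rw [fderivWithin_of_isOpen hS hu, (hasDerivAt_Qsc (ne_of_gt hu)).hasFDerivAt.fderiv]
      ext1; simp
    · exact hw
    · exact hw₂
  have hseq : ∀ n : ℕ, ‖Qsc w‖ ≤ 3 / ((n : ℝ) + 1) := by
    intro n
    set t : ℝ := (n : ℝ) + 3 with ht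
    have hn0 : (0:ℝ) ≤ (n : ℝ) := Nat.cast_nonneg n
    have ht1 : (1:ℝ) ≤ t := by rw [ht]; linarith
    have ht0 : (0:ℝ) < t := by linarith
    have him : (Complex.I * (t : ℂ)).im = t := by simp
    have hmem : (Complex.I * (t : ℂ)) ∈ S := by
      rw [hSdef]; exact mem_setOf.mpr (by rw [him]; exact ht0)
    rw [hconst _ hmem]
    have himne : (Complex.I * (t : ℂ)).im ≠ 0 := by rw [him]; exact ht0.ne'
    have hmb : ‖msc (Complex.I * (t : ℂ))‖ ≤ 1 / t := by
      have h := msc_bound himne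
      rwa [him, _root_.abs_of_pos ht0] at h
    have hm1 : ‖msc (Complex.I * (t : ℂ))‖ ≤ 1 := hmb.trans (by
      rw [div_le_one ht0]; linarith)
    set m := msc (Complex.I * (t : ℂ))
    have hden : (Complex.I * (t:ℂ))^2 - 4 = -(((t^2 + 4 : ℝ)) : ℂ) := by
      push_cast
      rw [mul_pow, Complex.I_sq]
      ring
    have hnum : ‖m ^ 2 + (Complex.I * (t:ℂ)) * m + 1‖ ≤ 3 := by
      have h1 : ‖m ^ 2‖ ≤ 1 := by
        rw [norm_pow]
        calc ‖m‖ ^ 2 ≤ 1 ^ 2 := by gcongr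
          _ = 1 := one_pow 2
      have h2 : ‖(Complex.I * (t:ℂ)) * m‖ ≤ 1 := by
        rw [norm_mul, norm_mul, Complex.norm_I, one_mul, Complex.norm_real,
          Real.norm_eq_abs, _root_.abs_of_pos ht0]
        calc t * ‖m‖ ≤ t * (1 / t) := by gcongr
          _ = 1 := by field_simp
      calc ‖m ^ 2 + (Complex.I * (t:ℂ)) * m + 1‖
          ≤ ‖m ^ 2 + (Complex.I * (t:ℂ)) * m‖ + ‖(1:ℂ)‖ := norm_add_le _ _
        _ ≤ ‖m ^ 2‖ + ‖(Complex.I * (t:ℂ)) * m‖ + ‖(1:ℂ)‖ := by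
            gcongr; exact norm_add_le _ _
        _ ≤ 1 + 1 + 1 := by rw [norm_one]; gcongr
        _ = 3 := by norm_num
    have hdnorm : ‖(Complex.I * (t:ℂ))^2 - 4‖ = t^2 + 4 := by
      rw [hden, norm_neg, Complex.norm_real, Real.norm_eq_abs,
        _root_.abs_of_pos (by positivity)]
    unfold Qsc
    rw [norm_div, hdnorm]
    calc ‖m ^ 2 + Complex.I * (t:ℂ) * m + 1‖ / (t ^ 2 + 4) ≤ 3 / (t^2 + 4) := by
          gcongr
      _ ≤ 3 / ((n:ℝ) + 1) := by
          have hnt : (n:ℝ) + 1 ≤ t ^ 2 + 4 := by rw [ht]; nlinarith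
          gcongr <;> linarith
  have h0 : Filter.Tendsto (fun n : ℕ => 3 / ((n:ℝ) + 1)) Filter.atTop (nhds 0) := by
    have := tendsto_one_div_add_atTop_nhds_zero_nat.const_mul (3:ℝ)
    simpa [div_eq_mul_inv, mul_comm] using this
  have hle : ‖Qsc w‖ ≤ 0 := ge_of_tendsto' h0 hseq
  simpa using norm_le_zero_iff.mp hle

lemma msc_conj {z : ℂ} (hz : z.im ≠ 0) :
    msc ((starRingEnd ℂ) z) = (starRingEnd ℂ) (msc z) := by
  have hint : IntervalIntegrable (fun x : ℝ => (rhoSc x : ℂ) / ((x:ℂ) - z)) volume (-2) 2 := by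
    simpa using intble_pow z hz 1
  have h := ContinuousLinearMap.intervalIntegral_comp_comm
    ((Complex.conjCLE : ℂ ≃L[ℝ] ℂ).toContinuousLinearMap) hint
  unfold msc
  have h2 : (starRingEnd ℂ) (∫ x in (-2:ℝ)..2, (rhoSc x : ℂ) / ((x:ℂ) - z))
      = Complex.conjCLE.toContinuousLinearMap (∫ x in (-2:ℝ)..2, (rhoSc x : ℂ) / ((x:ℂ) - z)) :=
    rfl
  rw [h2, ← h]
  apply intervalIntegral.integral_congr
  intro x _
  show _ = (starRingEnd ℂ) _
  rw [map_div₀, Complex.conj_ofReal, map_sub, Complex.conj_ofReal]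

lemma Qsc_eq_zero {z : ℂ} (hz : z.im ≠ 0) : msc z ^ 2 + z * msc z + 1 = 0 := by
  rcases hz.lt_or_gt with h | h
  · have hcim : ((starRingEnd ℂ) z).im = -z.im := Complex.conj_im z
    have hc : 0 < ((starRingEnd ℂ) z).im := by rw [hcim]; linarith
    have h0 := Qsc_eq_zero_upper hc
    unfold Qsc at h0
    rw [div_eq_zero_iff] at h0
    have h1 := h0.resolve_right (sq_ne_four (by rw [hcim]; linarith))
    rw [msc_conj hz] at h1
    have h2 := congrArg (starRingEnd ℂ) h1
    simpa [map_add, map_mul, map_pow] using h2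
  · have h0 := Qsc_eq_zero_upper h
    unfold Qsc at h0
    rw [div_eq_zero_iff] at h0
    exact h0.resolve_right (sq_ne_four hz)

lemma rho_pos {x : ℝ} (hx : x ∈ Ioo (-2:ℝ) 2) : 0 < rhoSc x := by
  apply div_pos (Real.sqrt_pos.mpr (by nlinarith [hx.1, hx.2])) (by positivity)

lemma msc_im_pos {z : ℂ} (hz : z.im ≠ 0) : 0 < z.im * (msc z).im := by
  have hint : IntervalIntegrable (fun x : ℝ => (rhoSc x : ℂ) / ((x:ℂ) - z)) volume (-2) 2 := by
    simpa using intble_pow z hz 1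
  have h := ContinuousLinearMap.intervalIntegral_comp_comm Complex.imCLM hint
  have him : (msc z).im
      = ∫ x in (-2:ℝ)..2, rhoSc x * (z.im / Complex.normSq ((x:ℂ) - z)) := by
    unfold msc
    rw [show (∫ x in (-2:ℝ)..2, (rhoSc x:ℂ) / ((x:ℂ) - z)).im
        = Complex.imCLM (∫ x in (-2:ℝ)..2, (rhoSc x:ℂ) / ((x:ℂ) - z)) from rfl, ← h]
    apply intervalIntegral.integral_congr
    intro x _
    simp only [Complex.imCLM_apply, Complex.div_im, Complex.ofReal_im, Complex.ofReal_re,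
      Complex.sub_im, Complex.sub_re]
    ring
  have : z.im * (msc z).im
      = ∫ x in (-2:ℝ)..2, z.im * (rhoSc x * (z.im / Complex.normSq ((x:ℂ) - z))) := by
    rw [him, intervalIntegral.integral_const_mul]
  rw [this]
  apply intervalIntegral.intervalIntegral_pos_of_pos_on
  · apply Continuous.intervalIntegrable
    apply Continuous.mul continuous_const
    apply Continuous.mul cont_rho
    apply Continuous.div continuous_const
    · exact Complex.continuous_normSq.comp (continuous_ofReal.sub continuous_const)
    · exact fun x => (Complex.normSq_pos.mpr (sub_z_ne hz x)).ne'
  · intro x hx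
    have h1 : 0 < Complex.normSq ((x:ℂ) - z) :=
      Complex.normSq_pos.mpr (sub_z_ne hz x)
    have h2 : 0 < rhoSc x := rho_pos hx
    have h3 : 0 < z.im * z.im := mul_self_pos.mpr hz
    have h4 : z.im * (rhoSc x * (z.im / Complex.normSq ((x:ℂ) - z)))
        = (z.im * z.im) * rhoSc x / Complex.normSq ((x:ℂ) - z) := by ring
    rw [h4]
    exact div_pos (mul_pos h3 h2) h1
  · norm_num

/-- The Stieltjes transform `m` of the semicircle distribution satisfies the Dyson equation
`-1/m(z) = m(z) + z` for all `z ∈ ℂ \ ℝ`, together with the sign condition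
`Im(z) · Im(m(z)) > 0`. -/
theorem msc_dyson_equation (z : ℂ) (hz : z.im ≠ 0) :
    (-1 : ℂ) / msc z = msc z + z ∧ 0 < z.im * (msc z).im := by
  constructor
  · have hQ := Qsc_eq_zero hz
    have hm0 : msc z ≠ 0 := by
      intro h
      rw [h] at hQ
      simp at hQ
    field_simp
    linear_combination -hQ
  · exact msc_im_pos hz
end

section
/- For any annular non-crossing permutation π of the (k,ℓ)-annulus, the number of cycles of π plus the number of cycles of its annular Kreweras complement K(π) equals k + ℓ. -/
open Equiv

/-- The reflection length of a permutation: the minimal number of transpositions needed to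
write it as a product. -/
noncomputable def reflLen {α : Type*} [DecidableEq α] [Fintype α] (σ : Equiv.Perm α) : ℕ :=
  sInf {m | ∃ l : List (Equiv.Perm α),
    l.length = m ∧ (∀ τ ∈ l, τ.IsSwap) ∧ l.prod = σ}

/-- The number of cycles of a permutation, counting fixed points as cycles of length one. -/
noncomputable def cycleCount {α : Type*} [DecidableEq α] [Fintype α] (σ : Equiv.Perm α) : ℕ :=
  σ.cycleType.card + (Fintype.card α - σ.support.card)

/-- The boundary permutation `γ = (1 ... k)(k+1 ... k+ℓ)` of the `(k,ℓ)`-annulus, rotating the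
outer circle `Fin k` and the inner circle `Fin ℓ`. -/
def annGamma (k l : ℕ) : Equiv.Perm (Fin k ⊕ Fin l) :=
  Equiv.sumCongr (finRotate k) (finRotate l)

/-- A permutation of the `(k,ℓ)`-annulus connects the two circles if some cycle contains a
point of each. -/
def Connects {k l : ℕ} (π : Equiv.Perm (Fin k ⊕ Fin l)) : Prop :=
  ∃ (x : Fin k) (y : Fin l), π.SameCycle (Sum.inl x) (Sum.inr y)

/-- Annular non-crossing permutations of the `(k,ℓ)`-annulus: permutations connecting the two
circles whose cycles can be drawn in the annulus without crossings and with standard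
orientation; equivalently (Mingo–Nica), permutations `π` connecting the two circles such that
the reflection lengths satisfy `|π| + |π⁻¹γ| = |γ| + 2`. -/
def IsAnnularNC (k l : ℕ) (π : Equiv.Perm (Fin k ⊕ Fin l)) : Prop :=
  Connects π ∧ reflLen π + reflLen (π⁻¹ * annGamma k l) = reflLen (annGamma k l) + 2

namespace AnnularAux

open Equiv Equiv.Perm Finset

set_option linter.unusedSectionVars false

variable {α : Type*} [DecidableEq α] [Fintype α]

/-- Kernel function whose fibers are exactly the cycles of `σ` (fixed points giving
singletons). -/
def gfun (σ : Equiv.Perm α) (x : α) : Finset α :=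
  if σ x = x then {x} else (σ.cycleOf x).support

lemma sameCycle_fixed {σ : Equiv.Perm α} {x y : α} (hx : σ x = x) (h : σ.SameCycle x y) :
    y = x := by
  obtain ⟨i, hi⟩ := h
  rw [zpow_apply_eq_self_of_apply_eq_self hx] at hi
  exact hi.symm

lemma gfun_eq_iff {σ : Equiv.Perm α} {x y : α} :
    gfun σ x = gfun σ y ↔ σ.SameCycle x y := by
  unfold gfun
  by_cases hx : σ x = x <;> by_cases hy : σ y = y
  · rw [if_pos hx, if_pos hy]
    constructor
    · intro h
      rw [Finset.singleton_inj] at h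
      exact h ▸ Equiv.Perm.SameCycle.refl σ x
    · intro h
      rw [sameCycle_fixed hx h]
  · rw [if_pos hx, if_neg hy]
    constructor
    · intro h
      have h2 : 2 ≤ ((σ.cycleOf y).support).card :=
        (Equiv.Perm.isCycle_cycleOf σ hy).two_le_card_support
      rw [← h] at h2
      simp at h2
    · intro h
      exact absurd (sameCycle_fixed hx h ▸ hx) hy
  · rw [if_neg hx, if_pos hy]
    constructor
    · intro h
      have h2 : 2 ≤ ((σ.cycleOf x).support).card :=
        (Equiv.Perm.isCycle_cycleOf σ hx).two_le_card_support
      rw [h] at h2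
      simp at h2
    · intro h
      exact absurd (sameCycle_fixed hy h.symm ▸ hy) hx
  · rw [if_neg hx, if_neg hy]
    constructor
    · intro h
      have hy' : y ∈ (σ.cycleOf x).support := by
        rw [h, mem_support_cycleOf_iff]
        exact ⟨Equiv.Perm.SameCycle.refl σ y, mem_support.2 hy⟩
      exact (mem_support_cycleOf_iff.1 hy').1
    · intro h
      rw [h.cycleOf_eq]

/-- Number of cycles of `σ` counted as the number of fibers of `gfun`. -/
def Ncl (σ : Equiv.Perm α) : ℕ := (Finset.univ.image (gfun σ)).card

lemma invariant_zpow {β : Type*} {F : α → β} {e : Equiv.Perm α} (h : ∀ x, F (e x) = F x) :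
    ∀ (i : ℤ) (x : α), F ((e ^ i) x) = F x := by
  have hn : ∀ (n : ℕ) (x : α), F ((e ^ n) x) = F x := by
    intro n
    induction n with
    | zero => intro x; simp
    | succ n ih => intro x; rw [pow_succ, Equiv.Perm.mul_apply, ih (e x), h]
  intro i x
  cases i with
  | ofNat n => exact hn n x
  | negSucc n =>
    have := hn (n + 1) ((e ^ (Int.negSucc n)) x)
    rw [zpow_negSucc, Equiv.Perm.inv_def, Equiv.apply_symm_apply] at this
    rw [zpow_negSucc]
    exact this.symm

lemma sameCycle_congr {β : Type*} {F : α → β} {e : Equiv.Perm α} (h : ∀ x, F (e x) = F x)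
    {x y : α} (hxy : e.SameCycle x y) : F x = F y := by
  obtain ⟨i, rfl⟩ := hxy
  exact (invariant_zpow h i x).symm

lemma card_image_le_of_factors [Nonempty α] {β : Type*} [DecidableEq β] {f g : α → β}
    (h : ∀ x y, f x = f y → g x = g y) :
    (Finset.univ.image g).card ≤ (Finset.univ.image f).card := by
  apply Finset.card_le_card_of_surjOn (fun t => g (Function.invFun f t))
  intro b hb
  simp only [coe_image, Set.mem_image, mem_coe, Finset.mem_image, Finset.mem_univ, true_and,
    Finset.coe_univ, Set.image_univ, Set.mem_range] at hb ⊢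
  obtain ⟨x, rfl⟩ := hb
  exact ⟨f x, ⟨x, rfl⟩, h _ _ (Function.invFun_eq ⟨x, rfl⟩)⟩

lemma Ncl_le_swap_mul [Nonempty α] (σ : Equiv.Perm α) {a b : α} (hab : a ≠ b) :
    Ncl σ ≤ Ncl (Equiv.swap a b * σ) + 1 := by
  set σ' := Equiv.swap a b * σ with hσ'
  set m : Finset α → Finset α := fun t => if t = gfun σ b then gfun σ a else t with hm
  have hma : m (gfun σ a) = gfun σ a := by
    simp only [hm]
    split_ifs <;> rfl
  have hmb : m (gfun σ b) = gfun σ a := by simp only [hm, if_pos]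
  have hstep : ∀ x, (m ∘ gfun σ) (σ' x) = (m ∘ gfun σ) x := by
    intro x
    have hx : σ.SameCycle x (σ x) := ⟨1, by simp⟩
    by_cases h1 : σ x = a
    · have hx' : σ' x = b := by
        rw [hσ', Equiv.Perm.mul_apply, h1, Equiv.swap_apply_left]
      have hxa : σ.SameCycle x a := by rw [← h1]; exact hx
      simp only [Function.comp_apply, hx', hmb]
      rw [gfun_eq_iff.2 hxa, hma]
    · by_cases h2 : σ x = b
      · have hx' : σ' x = a := by
          rw [hσ', Equiv.Perm.mul_apply, h2, Equiv.swap_apply_right]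
        have hxb : σ.SameCycle x b := by rw [← h2]; exact hx
        simp only [Function.comp_apply, hx', hma]
        rw [gfun_eq_iff.2 hxb, hmb]
      · have hx' : σ' x = σ x := by
          rw [hσ', Equiv.Perm.mul_apply, Equiv.swap_apply_of_ne_of_ne h1 h2]
        simp only [Function.comp_apply, hx']
        rw [gfun_eq_iff.2 hx.symm]
  have hfac : ∀ x y, gfun σ' x = gfun σ' y → (m ∘ gfun σ) x = (m ∘ gfun σ) y := fun x y h =>
    sameCycle_congr hstep (gfun_eq_iff.1 h)
  have h1 : (Finset.univ.image (m ∘ gfun σ)).card ≤ Ncl σ' := card_image_le_of_factors hfac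
  have h2 : Ncl σ ≤ (Finset.univ.image (m ∘ gfun σ)).card + 1 := by
    have himg : Finset.univ.image (m ∘ gfun σ) = (Finset.univ.image (gfun σ)).image m :=
      (Finset.image_image).symm
    have hsub : Finset.univ.image (gfun σ) ⊆
        insert (gfun σ b) ((Finset.univ.image (gfun σ)).image m) := by
      intro t ht
      by_cases htb : t = gfun σ b
      · exact htb ▸ Finset.mem_insert_self _ _
      · refine Finset.mem_insert_of_mem ?_
        have : m t = t := if_neg htb
        exact this ▸ Finset.mem_image_of_mem m ht
    calc Ncl σ ≤ (insert (gfun σ b) ((Finset.univ.image (gfun σ)).image m)).card :=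
          Finset.card_le_card hsub
      _ ≤ ((Finset.univ.image (gfun σ)).image m).card + 1 := Finset.card_insert_le _ _
      _ = (Finset.univ.image (m ∘ gfun σ)).card + 1 := by rw [himg]
  omega

lemma Ncl_split [Nonempty α] (σ : Equiv.Perm α) {x : α} (hx : σ x ≠ x) :
    Ncl σ + 1 ≤ Ncl (Equiv.swap x (σ x) * σ) := by
  set σ' := Equiv.swap x (σ x) * σ with hσ'
  have hσ'x : σ' x = x := by
    rw [hσ', Equiv.Perm.mul_apply, Equiv.swap_apply_right]
  have hxs : σ.SameCycle x (σ x) := ⟨1, by simp⟩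
  have hstep : ∀ u, gfun σ (σ' u) = gfun σ u := by
    intro u
    have hu : σ.SameCycle u (σ u) := ⟨1, by simp⟩
    by_cases h1 : σ u = x
    · have hu' : σ' u = σ x := by
        rw [hσ', Equiv.Perm.mul_apply, h1, Equiv.swap_apply_left]
      have h3 : σ.SameCycle x u := by rw [← h1]; exact hu.symm
      rw [hu']
      exact gfun_eq_iff.2 (hxs.symm.trans h3)
    · by_cases h2 : σ u = σ x
      · have hu' : σ' u = x := by
          rw [hσ', Equiv.Perm.mul_apply, h2, Equiv.swap_apply_right]
        have h3 : σ.SameCycle (σ x) u := by rw [← h2]; exact hu.symm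
        rw [hu']
        exact gfun_eq_iff.2 (hxs.trans h3)
      · have hu' : σ' u = σ u := by
          rw [hσ', Equiv.Perm.mul_apply, Equiv.swap_apply_of_ne_of_ne h1 h2]
        rw [hu']
        exact gfun_eq_iff.2 hu.symm
  have hfac : ∀ u v, gfun σ' u = gfun σ' v → gfun σ u = gfun σ v := fun u v h =>
    sameCycle_congr hstep (gfun_eq_iff.1 h)
  set φ : Finset α → Finset α := fun t => gfun σ (Function.invFun (gfun σ') t) with hφ
  have hφval : ∀ u, φ (gfun σ' u) = gfun σ u := fun u =>
    hfac _ _ (Function.invFun_eq ⟨u, rfl⟩)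
  have himg : Finset.univ.image (gfun σ) = (Finset.univ.image (gfun σ')).image φ := by
    rw [Finset.image_image]
    exact Finset.image_congr fun u _ => (hφval u).symm
  have ht12 : gfun σ' x ≠ gfun σ' (σ x) := by
    intro h
    exact hx (sameCycle_fixed hσ'x (gfun_eq_iff.1 h))
  have hφ12 : φ (gfun σ' x) = φ (gfun σ' (σ x)) := by
    rw [hφval, hφval]
    exact gfun_eq_iff.2 hxs
  have hmem2 : gfun σ' (σ x) ∈ (Finset.univ.image (gfun σ')).erase (gfun σ' x) :=
    Finset.mem_erase.2 ⟨Ne.symm ht12, Finset.mem_image_of_mem _ (Finset.mem_univ _)⟩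
  have hsub : (Finset.univ.image (gfun σ')).image φ ⊆
      ((Finset.univ.image (gfun σ')).erase (gfun σ' x)).image φ := by
    intro w hw
    obtain ⟨t, ht, rfl⟩ := Finset.mem_image.1 hw
    by_cases h : t = gfun σ' x
    · subst h
      rw [hφ12]
      exact Finset.mem_image_of_mem _ hmem2
    · exact Finset.mem_image_of_mem _ (Finset.mem_erase.2 ⟨h, ht⟩)
  have hcard : Ncl σ ≤ ((Finset.univ.image (gfun σ')).erase (gfun σ' x)).card := by
    calc Ncl σ = ((Finset.univ.image (gfun σ')).image φ).card := by rw [Ncl, himg]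
      _ ≤ (((Finset.univ.image (gfun σ')).erase (gfun σ' x)).image φ).card :=
          Finset.card_le_card hsub
      _ ≤ _ := Finset.card_image_le
  have ht1mem : gfun σ' x ∈ Finset.univ.image (gfun σ') :=
    Finset.mem_image_of_mem _ (Finset.mem_univ x)
  have hce := Finset.card_erase_of_mem ht1mem
  have hpos : 1 ≤ (Finset.univ.image (gfun σ')).card :=
    Finset.card_pos.2 ⟨_, ht1mem⟩
  have hN' : Ncl σ' = (Finset.univ.image (gfun σ')).card := rfl
  omega

lemma Ncl_one : Ncl (1 : Equiv.Perm α) = Fintype.card α := by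
  have h : gfun (1 : Equiv.Perm α) = fun x => ({x} : Finset α) := by
    funext x; simp [gfun]
  rw [Ncl, h, Finset.card_image_of_injective _ Finset.singleton_injective, Finset.card_univ]

lemma exists_decomp [Nonempty α] (σ : Equiv.Perm α) :
    ∃ l : List (Equiv.Perm α), (∀ τ ∈ l, τ.IsSwap) ∧ l.prod = σ ∧
      Ncl σ + l.length = Fintype.card α := by
  suffices H : ∀ (n : ℕ) (σ : Equiv.Perm α), σ.support.card ≤ n →
      ∃ l : List (Equiv.Perm α), (∀ τ ∈ l, τ.IsSwap) ∧ l.prod = σ ∧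
        Ncl σ + l.length = Fintype.card α from H _ σ le_rfl
  intro n
  induction n with
  | zero =>
    intro σ hσ
    have h1 : σ = 1 :=
      Equiv.Perm.support_eq_empty_iff.1 (Finset.card_eq_zero.1 (Nat.le_zero.1 hσ))
    subst h1
    exact ⟨[], by simp, by simp, by simp [Ncl_one]⟩
  | succ n ih =>
    intro σ hσ
    by_cases h1 : σ = 1
    · subst h1
      exact ⟨[], by simp, by simp, by simp [Ncl_one]⟩
    · obtain ⟨x, hx⟩ : ∃ x, σ x ≠ x := by
        by_contra h
        push_neg at h
        exact h1 (Equiv.ext h)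
      have hlt : (Equiv.swap x (σ x) * σ).support.card < σ.support.card :=
        Equiv.Perm.card_support_swap_mul hx
      obtain ⟨l, hl1, hl2, hl3⟩ := ih (Equiv.swap x (σ x) * σ) (by omega)
      refine ⟨Equiv.swap x (σ x) :: l, ?_, ?_, ?_⟩
      · intro τ hτ
        rcases List.mem_cons.1 hτ with h | h
        · exact h ▸ ⟨x, σ x, Ne.symm hx, rfl⟩
        · exact hl1 τ h
      · rw [List.prod_cons, hl2, ← mul_assoc, Equiv.swap_mul_self, one_mul]
      · have hsplit : Ncl σ + 1 ≤ Ncl (Equiv.swap x (σ x) * σ) := Ncl_split σ hx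
        have hother : Ncl (Equiv.swap x (σ x) * σ) ≤ Ncl σ + 1 := by
          have h := Ncl_le_swap_mul (Equiv.swap x (σ x) * σ) (Ne.symm hx)
          rwa [← mul_assoc, Equiv.swap_mul_self, one_mul] at h
        simp only [List.length_cons]
        omega

lemma le_Ncl_prod [Nonempty α] (l : List (Equiv.Perm α)) (hl : ∀ τ ∈ l, τ.IsSwap) :
    Fintype.card α ≤ Ncl l.prod + l.length := by
  induction l with
  | nil => simp [Ncl_one]
  | cons τ l ih =>
    obtain ⟨a, b, hab, rfl⟩ := hl τ List.mem_cons_self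
    have h1 := Ncl_le_swap_mul l.prod hab
    have h2 := ih fun τ' hτ' => hl τ' (List.mem_cons_of_mem _ hτ')
    rw [List.prod_cons]
    simp only [List.length_cons]
    omega

lemma reflLen_add_Ncl [Nonempty α] (σ : Equiv.Perm α) :
    reflLen σ + Ncl σ = Fintype.card α := by
  obtain ⟨l, h1, h2, h3⟩ := exists_decomp σ
  have hmem : l.length ∈ {m | ∃ l : List (Equiv.Perm α),
      l.length = m ∧ (∀ τ ∈ l, τ.IsSwap) ∧ l.prod = σ} := ⟨l, rfl, h1, h2⟩
  have hub : reflLen σ ≤ l.length := Nat.sInf_le hmem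
  obtain ⟨l', hlen', hsw', hprod'⟩ := Nat.sInf_mem (Set.nonempty_of_mem hmem)
  have hlb := le_Ncl_prod l' hsw'
  rw [hprod'] at hlb
  unfold reflLen
  unfold reflLen at hub
  omega

lemma Ncl_eq_cycleCount (σ : Equiv.Perm α) : Ncl σ = cycleCount σ := by
  have himage : Finset.univ.image (gfun σ) =
      (σ.support.image fun x => (σ.cycleOf x).support) ∪
        (σ.supportᶜ.image fun x => ({x} : Finset α)) := by
    conv_lhs => rw [← Finset.union_compl σ.support]
    rw [Finset.image_union]
    congr 1
    · exact Finset.image_congr fun x hx => if_neg (Equiv.Perm.mem_support.1 hx)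
    · refine Finset.image_congr fun x hx => if_pos ?_
      simpa [Equiv.Perm.notMem_support] using hx
  have hdisj : Disjoint (σ.support.image fun x => (σ.cycleOf x).support)
      (σ.supportᶜ.image fun x => ({x} : Finset α)) := by
    rw [Finset.disjoint_left]
    intro t ht1 ht2
    obtain ⟨x, hx, rfl⟩ := Finset.mem_image.1 ht1
    obtain ⟨y, hy, hyt⟩ := Finset.mem_image.1 ht2
    have h2 : 2 ≤ (σ.cycleOf x).support.card :=
      (Equiv.Perm.isCycle_cycleOf σ (Equiv.Perm.mem_support.1 hx)).two_le_card_support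
    rw [← hyt] at h2
    simp at h2
  have hcFact : σ.support.image (fun x => (σ.cycleOf x).support)
      = σ.cycleFactorsFinset.image Equiv.Perm.support := by
    ext t
    simp only [Finset.mem_image]
    constructor
    · rintro ⟨x, hx, rfl⟩
      exact ⟨σ.cycleOf x, Equiv.Perm.cycleOf_mem_cycleFactorsFinset_iff.2 hx, rfl⟩
    · rintro ⟨c, hc, rfl⟩
      have hc1 : c.IsCycle := (Equiv.Perm.mem_cycleFactorsFinset_iff.1 hc).1
      obtain ⟨a, ha⟩ : c.support.Nonempty :=
        Finset.card_pos.1 (by have := hc1.two_le_card_support; omega)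
      have haσ : a ∈ σ.support := by
        rw [Equiv.Perm.mem_support, ← (Equiv.Perm.mem_cycleFactorsFinset_iff.1 hc).2 a ha]
        exact Equiv.Perm.mem_support.1 ha
      exact ⟨a, haσ, by rw [← Equiv.Perm.cycle_is_cycleOf ha hc]⟩
  have hinj : Set.InjOn Equiv.Perm.support (σ.cycleFactorsFinset : Set (Equiv.Perm α)) := by
    intro c hc c' hc' hsupp
    by_contra hne
    have hd := (Equiv.Perm.cycleFactorsFinset_pairwise_disjoint σ) hc hc' hne
    have hd2 := hd.disjoint_support
    rw [hsupp] at hd2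
    have hemp : c'.support = ∅ := Disjoint.eq_bot_of_self hd2
    have := (Equiv.Perm.mem_cycleFactorsFinset_iff.1 hc').1.two_le_card_support
    rw [hemp] at this
    simp at this
  have hctc : σ.cycleType.card = σ.cycleFactorsFinset.card := by
    rw [Equiv.Perm.cycleType_def, Multiset.card_map]
    rfl
  rw [Ncl, himage, Finset.card_union_of_disjoint hdisj, hcFact,
    Finset.card_image_of_injOn hinj,
    Finset.card_image_of_injective _ Finset.singleton_injective, Finset.card_compl]
  rw [cycleCount, hctc]

open Fin.NatCast in
lemma finRotate_pow_apply (n j : ℕ) (x : Fin (n + 1)) :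
    ((finRotate (n + 1)) ^ j) x = x + (j : Fin (n + 1)) := by
  induction j with
  | zero => simp
  | succ j ih =>
    rw [pow_succ', Equiv.Perm.mul_apply, ih, finRotate_succ_apply, Nat.cast_add, Nat.cast_one,
      add_assoc]

lemma annGamma_apply_inl (k l : ℕ) (x : Fin k) :
    (annGamma k l) (Sum.inl x) = Sum.inl (finRotate k x) := rfl

lemma annGamma_apply_inr (k l : ℕ) (y : Fin l) :
    (annGamma k l) (Sum.inr y) = Sum.inr (finRotate l y) := rfl

lemma annGamma_pow_inl (k l : ℕ) (j : ℕ) (x : Fin k) :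
    ((annGamma k l) ^ j) (Sum.inl x) = Sum.inl (((finRotate k) ^ j) x) := by
  induction j generalizing x with
  | zero => simp
  | succ j ih =>
    rw [pow_succ', Equiv.Perm.mul_apply, pow_succ', Equiv.Perm.mul_apply, ih,
      annGamma_apply_inl]

lemma annGamma_pow_inr (k l : ℕ) (j : ℕ) (y : Fin l) :
    ((annGamma k l) ^ j) (Sum.inr y) = Sum.inr (((finRotate l) ^ j) y) := by
  induction j generalizing y with
  | zero => simp
  | succ j ih =>
    rw [pow_succ', Equiv.Perm.mul_apply, pow_succ', Equiv.Perm.mul_apply, ih,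
      annGamma_apply_inr]

lemma annGamma_zpow_inl (k l : ℕ) (i : ℤ) (x : Fin k) :
    ((annGamma k l) ^ i) (Sum.inl x) = Sum.inl (((finRotate k) ^ i) x) := by
  cases i with
  | ofNat n =>
    rw [Int.ofNat_eq_coe, zpow_natCast, zpow_natCast]
    exact annGamma_pow_inl k l n x
  | negSucc n =>
    rw [zpow_negSucc, zpow_negSucc]
    apply ((annGamma k l) ^ (n + 1)).injective
    rw [Equiv.Perm.inv_def, Equiv.apply_symm_apply, annGamma_pow_inl, Equiv.Perm.inv_def,
      Equiv.apply_symm_apply]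

lemma sameCycle_inl {k l : ℕ} (hk : 0 < k) (x y : Fin k) :
    (annGamma k l).SameCycle (Sum.inl x) (Sum.inl y) := by
  obtain ⟨k, rfl⟩ : ∃ k', k = k' + 1 := ⟨k - 1, by omega⟩
  refine ⟨((y - x).val : ℤ), ?_⟩
  have hfin : x + (y - x) = y := by abel
  rw [zpow_natCast, annGamma_pow_inl, finRotate_pow_apply, Fin.cast_val_eq_self, hfin]

lemma sameCycle_inr {k l : ℕ} (hl : 0 < l) (x y : Fin l) :
    (annGamma k l).SameCycle (Sum.inr x) (Sum.inr y) := by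
  obtain ⟨l, rfl⟩ : ∃ l', l = l' + 1 := ⟨l - 1, by omega⟩
  refine ⟨((y - x).val : ℤ), ?_⟩
  have : ((annGamma k (l + 1)) ^ (((y - x).val : ℕ))) (Sum.inr x) = Sum.inr y := by
    have hfin : x + (y - x) = y := by abel
    rw [annGamma_pow_inr, finRotate_pow_apply, Fin.cast_val_eq_self, hfin]
  rw [zpow_natCast]
  exact this

lemma not_sameCycle_inl_inr (k l : ℕ) (x : Fin k) (y : Fin l) :
    ¬ (annGamma k l).SameCycle (Sum.inl x) (Sum.inr y) := by
  rintro ⟨i, hi⟩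
  rw [annGamma_zpow_inl] at hi
  simp at hi

lemma Ncl_annGamma (k l : ℕ) (hk : 0 < k) (hl : 0 < l) : Ncl (annGamma k l) = 2 := by
  set γ := annGamma k l with hγ
  set x0 : Fin k ⊕ Fin l := Sum.inl ⟨0, hk⟩ with hx0
  set y0 : Fin k ⊕ Fin l := Sum.inr ⟨0, hl⟩ with hy0
  have himg : Finset.univ.image (gfun γ) = {gfun γ x0, gfun γ y0} := by
    ext t
    simp only [Finset.mem_image, Finset.mem_univ, true_and, Finset.mem_insert,
      Finset.mem_singleton]
    constructor
    · rintro ⟨u, rfl⟩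
      cases u with
      | inl x => exact Or.inl (gfun_eq_iff.2 (sameCycle_inl hk x ⟨0, hk⟩))
      | inr y => exact Or.inr (gfun_eq_iff.2 (sameCycle_inr hl y ⟨0, hl⟩))
    · rintro (rfl | rfl)
      exacts [⟨x0, rfl⟩, ⟨y0, rfl⟩]
  have hne : gfun γ x0 ≠ gfun γ y0 := by
    intro h
    exact not_sameCycle_inl_inr k l ⟨0, hk⟩ ⟨0, hl⟩ (gfun_eq_iff.1 h)
  rw [Ncl, himg, Finset.card_pair hne]

end AnnularAux

/-- For any annular non-crossing permutation `π` of the `(k,ℓ)`-annulus, the number of cycles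
of `π` plus the number of cycles of its annular Kreweras complement `K(π) = π⁻¹γ` equals
`k + ℓ`. -/
theorem annular_kreweras_cycle_count (k l : ℕ) (hk : 0 < k) (hl : 0 < l)
    (π : Equiv.Perm (Fin k ⊕ Fin l)) (hπ : IsAnnularNC k l π) :
    cycleCount π + cycleCount (π⁻¹ * annGamma k l) = k + l := by
  have hne : Nonempty (Fin k ⊕ Fin l) := ⟨Sum.inl ⟨0, hk⟩⟩
  have hrefl : reflLen π + reflLen (π⁻¹ * annGamma k l) = reflLen (annGamma k l) + 2 := hπ.2
  have e1 := AnnularAux.reflLen_add_Ncl π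
  have e2 := AnnularAux.reflLen_add_Ncl (π⁻¹ * annGamma k l)
  have e3 := AnnularAux.reflLen_add_Ncl (annGamma k l)
  have hγ := AnnularAux.Ncl_annGamma k l hk hl
  have hc1 := AnnularAux.Ncl_eq_cycleCount π
  have hc2 := AnnularAux.Ncl_eq_cycleCount (π⁻¹ * annGamma k l)
  have hcard : Fintype.card (Fin k ⊕ Fin l) = k + l := by simp
  omega
end
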